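/- Let R be a finite type with at least two elements and f : R → ℝ an injective function that is an interval scale. Then the quantity f(b) − f(a) is the same strictly positive constant for every prime interval [a,b]_f: there exists k > 0 such that for all a, b ∈ R with f(a) < f(b) and {r ∈ R : f(a) ≤ f(r) ≤ f(b)} = {a, b}, one has f(b) − f(a) = k. -/
import Mathlib


/-- For an injective interval scale `f` on a finite type with at least two
elements, the difference `f b - f a` is the same strictly positive constant on
every prime interval. -/
theorem constant_difference_on_prime_intervals {R : Type*} [Fintype R]
    (hR : 2 ≤ Fintype.card R) (f : R → ℝ) (hf : Function.Injective f)
    (hscale : ∀ a b c d : R, f a ≤ f b → f c ≤ f d →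
      ({r : R | f a ≤ f r ∧ f r ≤ f b}.ncard ≤ {r : R | f c ≤ f r ∧ f r ≤ f d}.ncard ↔
        f b - f a ≤ f d - f c)) :
    ∃ k : ℝ, 0 < k ∧ ∀ a b : R, f a < f b →
      {r : R | f a ≤ f r ∧ f r ≤ f b} = {a, b} → f b - f a = k := by
  by_cases h : ∃ a b : R, f a < f b ∧ {r : R | f a ≤ f r ∧ f r ≤ f b} = {a, b}
  · obtain ⟨a₀, b₀, hab₀, hset₀⟩ := h
    refine ⟨f b₀ - f a₀, by linarith, ?_⟩
    intro a b hab hset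
    have hne : a ≠ b := fun h => by rw [h] at hab; exact lt_irrefl _ hab
    have hne₀ : a₀ ≠ b₀ := fun h => by rw [h] at hab₀; exact lt_irrefl _ hab₀
    have hc : ({r : R | f a ≤ f r ∧ f r ≤ f b}).ncard = 2 := by
      rw [hset, Set.ncard_pair hne]
    have hc₀ : ({r : R | f a₀ ≤ f r ∧ f r ≤ f b₀}).ncard = 2 := by
      rw [hset₀, Set.ncard_pair hne₀]
    have h1 := (hscale a b a₀ b₀ hab.le hab₀.le).mp (by rw [hc, hc₀])
    have h2 := (hscale a₀ b₀ a b hab₀.le hab.le).mp (by rw [hc, hc₀])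
    linarith
  · exact ⟨1, one_pos, fun a b hab hset => absurd ⟨a, b, hab, hset⟩ h⟩
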